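/- Let K be a field, n ≥ 2 an integer, and let c, z_1, …, z_n ∈ K be nonzero elements such that z_1, …, z_{n−1} are pairwise distinct and c·z_i ≠ z_j for all i, j ∈ {1,…,n}. For k = 1,…,n−1 set W_k = (∏_{1≤i≤n−1, i≠k} (z_n−z_i)/(z_k−z_i)) · (∏_{i=1}^{n−1} (z_k−c·z_i)/(z_n−c·z_i)). Then for every j ∈ {1,…,n−1} one has ∑_{k=1}^{n−1} W_k · 1/(1−c^{−1}z_k/z_j) = 1/(1−c^{−1}z_n/z_j). (Equivalently, the row vector (W_1,…,W_{n−1}) equals V_c·M_c^{−1}, where M_c is the (n−1)×(n−1) matrix with entries (M_c)_{kj} = 1/(1−c^{−1}z_k/z_j) and V_c is the row vector with entries (V_c)_j = 1/(1−c^{−1}z_n/z_j).) -/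

import Mathlib

open Finset

open Polynomial in
lemma lagrange_prod_sub {K : Type*} [Field K] (s : Finset ℕ) (v u : ℕ → K)
    (hv : Set.InjOn v s) (t : K) :
    ∏ i ∈ s, (t - u i) - ∏ i ∈ s, (t - v i)
      = ∑ k ∈ s, ((∏ i ∈ s, (v k - u i)) * (∏ i ∈ s.erase k, (v k - v i))⁻¹)
          * ∏ i ∈ s.erase k, (t - v i) := by
  set P : K[X] := ∏ i ∈ s, (X - C (u i)) with hP
  set Q : K[X] := ∏ i ∈ s, (X - C (v i)) with hQ
  have hPm : P.Monic := monic_prod_of_monic _ _ fun i _ => monic_X_sub_C _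
  have hQm : Q.Monic := monic_prod_of_monic _ _ fun i _ => monic_X_sub_C _
  have hPdeg : P.degree = (#s : ℕ) := by
    rw [hP, degree_prod]
    simp [degree_X_sub_C]
  have hQdeg : Q.degree = (#s : ℕ) := by
    rw [hQ, degree_prod]
    simp [degree_X_sub_C]
  have hdeg : (P - Q).degree < (#s : ℕ) := by
    rcases eq_or_ne P Q with h | h
    · rw [h, sub_self, degree_zero]
      exact WithBot.bot_lt_coe _
    · calc (P - Q).degree < P.degree :=
            degree_sub_lt (hPdeg.trans hQdeg.symm) hPm.ne_zero
              (hPm.leadingCoeff.trans hQm.leadingCoeff.symm)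
        _ = (#s : ℕ) := hPdeg
  have hinterp := Lagrange.eq_interpolate (f := P - Q) hv hdeg
  have hval : ∀ k ∈ s, (P - Q).eval (v k) = ∏ i ∈ s, (v k - u i) := by
    intro k hk
    have hQ0 : Q.eval (v k) = 0 := by
      rw [hQ, eval_prod]
      exact prod_eq_zero hk (by simp)
    simp [eval_sub, hQ0, hP, eval_prod]
  rw [Lagrange.interpolate_eq_of_values_eq_on _ _ hval] at hinterp
  have := congrArg (Polynomial.eval t) hinterp
  rw [eval_sub] at this
  simp only [hP, hQ, eval_prod, eval_sub, eval_X, eval_C] at this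
  rw [this, Lagrange.interpolate_apply, eval_finset_sum]
  refine sum_congr rfl fun k hk => ?_
  rw [eval_mul, eval_C, Lagrange.basis, eval_prod]
  rw [mul_assoc]
  congr 1
  rw [← prod_inv_distrib, ← prod_mul_distrib]
  refine prod_congr rfl fun i hi => ?_
  simp [Lagrange.basisDivisor]

/-- Khoroshkin–Shapiro, Proposition 6(a): the row vector `W = V_c · M_c⁻¹` for the
Cauchy-type matrix `M_c` with entries `1/(1 - c⁻¹ z_k / z_j)`. -/
theorem weight_function_VM_inverse
    (K : Type*) [Field K] (n : ℕ) (hn : 2 ≤ n) (c : K) (z : ℕ → K)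
    (hc : c ≠ 0) (hz : ∀ i ∈ Icc 1 n, z i ≠ 0)
    (hdist : ∀ i ∈ Icc 1 (n - 1), ∀ j ∈ Icc 1 (n - 1), i ≠ j → z i ≠ z j)
    (hcz : ∀ i ∈ Icc 1 n, ∀ j ∈ Icc 1 n, c * z i ≠ z j) :
    ∀ j ∈ Icc 1 (n - 1),
      ∑ k ∈ Icc 1 (n - 1),
        ((∏ i ∈ (Icc 1 (n - 1)).erase k, (z n - z i) / (z k - z i)) *
          ∏ i ∈ Icc 1 (n - 1), (z k - c * z i) / (z n - c * z i)) *
        (1 / (1 - c⁻¹ * z k / z j))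
      = 1 / (1 - c⁻¹ * z n / z j) := by
  intro j hj
  set s : Finset ℕ := Icc 1 (n - 1) with hs
  have hsub : ∀ i ∈ s, i ∈ Icc 1 n := by
    intro i hi
    rw [hs, mem_Icc] at hi
    rw [mem_Icc]
    omega
  have hnn : n ∈ Icc 1 n := by rw [mem_Icc]; omega
  have hjn := hsub j hj
  have hInj : Set.InjOn z s := by
    intro a ha b hb hab
    by_contra hne
    exact hdist a (mem_coe.mp ha) b (mem_coe.mp hb) hne hab
  set w := c * z j with hw
  have hw0 : w ≠ 0 := mul_ne_zero hc (hz j hjn)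
  have hwk : ∀ k ∈ Icc 1 n, w - z k ≠ 0 := fun k hk => sub_ne_zero.mpr (hcz j hjn k hk)
  have hDne : ∀ i ∈ s, z n - c * z i ≠ 0 :=
    fun i hi => sub_ne_zero.mpr (Ne.symm (hcz i (hsub i hi) n hnn))
  have hzkz : ∀ k ∈ s, ∀ i ∈ s.erase k, z k - z i ≠ 0 := by
    intro k hk i hi
    obtain ⟨hik, his⟩ := mem_erase.mp hi
    exact sub_ne_zero.mpr (hdist k hk i his (Ne.symm hik))
  set D := ∏ i ∈ s, (z n - c * z i) with hD
  have hD0 : D ≠ 0 := prod_ne_zero_iff.mpr hDne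
  set a : ℕ → K := fun k => (∏ i ∈ s, (z k - c * z i)) * (∏ i ∈ s.erase k, (z k - z i))⁻¹
    with ha
  set e : ℕ → K := fun k => ∏ i ∈ s.erase k, (z n - z i) with he
  -- entries
  have hentry : ∀ k ∈ Icc 1 n, 1 / (1 - c⁻¹ * z k / z j) = w * (w - z k)⁻¹ := by
    intro k hk
    have h1 : 1 - c⁻¹ * z k / z j = (w - z k) / w := by
      rw [hw]
      field_simp [hz j hjn]
    rw [h1, one_div_div, div_eq_mul_inv]
  -- the key identity
  have key : ∑ k ∈ s, a k * e k * (w - z k)⁻¹ = D * (w - z n)⁻¹ := by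
    by_cases hdg : ∃ m ∈ s, z m = z n
    · obtain ⟨m, hm, hzm⟩ := hdg
      rw [sum_eq_single_of_mem m hm]
      · have hem : e m = ∏ i ∈ s.erase m, (z m - z i) := by
          rw [he]; exact prod_congr rfl fun i _ => by rw [hzm]
        have hae : a m * e m = ∏ i ∈ s, (z m - c * z i) := by
          rw [ha, hem, mul_assoc, inv_mul_cancel₀ (prod_ne_zero_iff.mpr (hzkz m hm)), mul_one]
        have hDm : D = ∏ i ∈ s, (z m - c * z i) := by
          rw [hD]; exact prod_congr rfl fun i _ => by rw [hzm]
        rw [hae, ← hDm, ← hzm]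
      · intro k hk hkm
        have : e k = 0 := by
          rw [he]
          exact prod_eq_zero (mem_erase.mpr ⟨Ne.symm hkm, hm⟩) (by rw [hzm, sub_self])
        rw [this, mul_zero, zero_mul]
    · push_neg at hdg
      have hNk : ∀ k ∈ s, z n - z k ≠ 0 := fun k hk => sub_ne_zero.mpr (Ne.symm (hdg k hk))
      set E := ∏ i ∈ s, (z n - z i) with hE
      have hE0 : E ≠ 0 := prod_ne_zero_iff.mpr hNk
      have hwN : w - z n ≠ 0 := hwk n hnn
      -- general partial-fraction consequence of the Lagrange identity
      have hSInv : ∀ t : K, (∀ k ∈ s, t - z k ≠ 0) →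
          ∑ k ∈ s, a k * (t - z k)⁻¹
            = (∏ i ∈ s, (t - c * z i)) * (∏ i ∈ s, (t - z i))⁻¹ - 1 := by
        intro t ht
        have hB := lagrange_prod_sub s z (fun i => c * z i) hInj t
        have hP0 : (∏ i ∈ s, (t - z i)) ≠ 0 := prod_ne_zero_iff.mpr ht
        calc ∑ k ∈ s, a k * (t - z k)⁻¹
            = ∑ k ∈ s, ((∏ i ∈ s, (z k - c * z i)) * (∏ i ∈ s.erase k, (z k - z i))⁻¹
                * ∏ i ∈ s.erase k, (t - z i)) * (∏ i ∈ s, (t - z i))⁻¹ := by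
              refine sum_congr rfl fun k hk => ?_
              have hsplit : ∏ i ∈ s, (t - z i) = (t - z k) * ∏ i ∈ s.erase k, (t - z i) :=
                (mul_prod_erase s _ hk).symm
              have hek : (∏ i ∈ s.erase k, (t - z i)) ≠ 0 := by
                intro h0
                exact hP0 (by rw [hsplit, h0, mul_zero])
              have h2 : (∏ i ∈ s.erase k, (t - z i))
                  * ((t - z k) * ∏ i ∈ s.erase k, (t - z i))⁻¹ = (t - z k)⁻¹ := by
                rw [mul_inv, mul_comm (t - z k)⁻¹, ← mul_assoc, mul_inv_cancel₀ hek, one_mul]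
              simp only [ha]
              rw [hsplit]
              conv_rhs => rw [mul_assoc, h2]
          _ = (∑ k ∈ s, (∏ i ∈ s, (z k - c * z i)) * (∏ i ∈ s.erase k, (z k - z i))⁻¹
                * ∏ i ∈ s.erase k, (t - z i)) * (∏ i ∈ s, (t - z i))⁻¹ := by
              rw [sum_mul]
          _ = (∏ i ∈ s, (t - c * z i) - ∏ i ∈ s, (t - z i)) * (∏ i ∈ s, (t - z i))⁻¹ := by
              rw [← hB]
          _ = (∏ i ∈ s, (t - c * z i)) * (∏ i ∈ s, (t - z i))⁻¹ - 1 := by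
              rw [sub_mul, mul_inv_cancel₀ hP0]
      have hSw : ∑ k ∈ s, a k * (w - z k)⁻¹ = -1 := by
        have h0 : ∏ i ∈ s, (w - c * z i) = 0 :=
          prod_eq_zero hj (by rw [hw, sub_self])
        rw [hSInv w (fun k hk => hwk k (hsub k hk)), h0, zero_mul, zero_sub]
      have hSN : ∑ k ∈ s, a k * (z n - z k)⁻¹ = D * E⁻¹ - 1 := by
        rw [hSInv (z n) hNk]
      have hek : ∀ k ∈ s, e k = E * (z n - z k)⁻¹ := by
        intro k hk
        have hsplit : E = (z n - z k) * e k := by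
          rw [hE, he]; exact (mul_prod_erase s _ hk).symm
        rw [hsplit, mul_comm (z n - z k), mul_assoc, mul_inv_cancel₀ (hNk k hk), mul_one]
      have hterm : ∀ k ∈ s, a k * e k * (w - z k)⁻¹
          = E * (w - z n)⁻¹ * (a k * (z n - z k)⁻¹ - a k * (w - z k)⁻¹) := by
        intro k hk
        rw [hek k hk]
        have h1 := hNk k hk
        have h2 := hwk k (hsub k hk)
        field_simp
        ring
      rw [sum_congr rfl hterm, ← mul_sum, sum_sub_distrib, hSN, hSw]
      field_simp
      ring
  -- assemble
  have hsummand : ∀ k ∈ s,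
      ((∏ i ∈ s.erase k, (z n - z i) / (z k - z i)) *
        ∏ i ∈ s, (z k - c * z i) / (z n - c * z i)) * (1 / (1 - c⁻¹ * z k / z j))
      = a k * e k * (w - z k)⁻¹ * (w * D⁻¹) := by
    intro k hk
    rw [hentry k (hsub k hk), prod_div_distrib, prod_div_distrib]
    rw [div_eq_mul_inv, div_eq_mul_inv, ha, he]
    ring
  have hwN : w - z n ≠ 0 := hwk n hnn
  rw [sum_congr rfl hsummand, ← sum_mul, key, hentry n hnn]
  rw [show D * (w - z n)⁻¹ * (w * D⁻¹) = D * D⁻¹ * (w * (w - z n)⁻¹) from by ring,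
    mul_inv_cancel₀ hD0, one_mul]
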